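/- Let Ū, U ∈ 𝕆_{p,r} with Uᵀ Ū invertible. Then ‖U⊥ᵀ Ū (Uᵀ Ū)⁻¹‖ = ‖sin Θ(U, Ū)‖ / √(1 − ‖sin Θ(U, Ū)‖²), where ‖sin Θ(U, Ū)‖ = √(1 − σ_r²(Uᵀ Ū)) and ‖·‖ denotes the spectral norm. -/

import Mathlib

open Matrix
noncomputable section

theorem Matrix.isHermitian_transpose_mul_self {m n : Type*} [Fintype m] (A : Matrix m n ℝ) :
    (Aᵀ * A).IsHermitian := by
  simpa using Matrix.isHermitian_conjTranspose_mul_self A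

/-- Frobenius norm of a real matrix. -/
def frob {m n : Type*} [Fintype m] [Fintype n] (A : Matrix m n ℝ) : ℝ :=
  Real.sqrt (∑ i, ∑ j, (A i j) ^ 2)

/-- Spectral (operator ℓ²→ℓ²) norm of a real matrix. -/
def spec {m n : Type*} [Fintype m] [Fintype n] [DecidableEq n] (A : Matrix m n ℝ) : ℝ :=
  ‖LinearMap.toContinuousLinearMap (Matrix.toEuclideanLin A)‖

/-- Nuclear norm: sum of singular values (square roots of eigenvalues of AᵀA). -/
def nuc {m n : Type*} [Fintype m] [Fintype n] [DecidableEq n] (A : Matrix m n ℝ) : ℝ :=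
  ∑ i, Real.sqrt ((Matrix.isHermitian_transpose_mul_self A).eigenvalues i)

open scoped Matrix.Norms.L2Operator

lemma spec_eq_norm' {m n : Type*} [Fintype m] [Fintype n] [DecidableEq n] (A : Matrix m n ℝ) :
    spec A = ‖A‖ := rfl

lemma euclid_norm_sq' {n : Type*} [Fintype n] (v : EuclideanSpace ℝ n) :
    ‖v‖ ^ 2 = ∑ i, (v i) ^ 2 := by
  rw [EuclideanSpace.norm_eq, Real.sq_sqrt (by positivity)]
  simp [Real.norm_eq_abs, sq_abs]

/-- The spectral norm of a matrix diagonalized by an orthonormal basis is the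
largest absolute value of the diagonal entries. -/
lemma spec_eq_iSup_abs' {n : Type*} [Fintype n] [DecidableEq n] [Nonempty n]
    (N : Matrix n n ℝ) (b : OrthonormalBasis n ℝ (EuclideanSpace ℝ n)) (μ : n → ℝ)
    (h : ∀ i, N *ᵥ ⇑(b i) = μ i • ⇑(b i)) :
    spec N = ⨆ i, |μ i| := by
  set f := LinearMap.toContinuousLinearMap (Matrix.toEuclideanLin N) with hfdef
  have hfb : ∀ i, f (b i) = μ i • b i := by
    intro i
    show Matrix.toEuclideanLin N (b i) = μ i • b i
    exact congrArg (WithLp.equiv 2 (n → ℝ)).symm (h i)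
  have hrepr : ∀ (x : EuclideanSpace ℝ n) (i : n), b.repr (f x) i = μ i * b.repr x i := by
    intro x i
    conv_lhs => rw [← b.sum_repr x, map_sum, map_sum]
    simp only [_root_.map_smul, hfb, smul_smul]
    simp only [_root_.map_smul, OrthonormalBasis.repr_self]
    rw [WithLp.ofLp_sum, Finset.sum_apply i Finset.univ]
    simp [PiLp.smul_apply, EuclideanSpace.single_apply, mul_comm]
  set C := ⨆ i, |μ i| with hC
  have hCi : ∀ i, |μ i| ≤ C := fun i =>
    le_ciSup (Set.Finite.bddAbove (Set.finite_range fun i => |μ i|)) i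
  have hC0 : 0 ≤ C := le_trans (abs_nonneg _) (hCi (Classical.arbitrary n))
  have hub : ‖f‖ ≤ C := by
    apply ContinuousLinearMap.opNorm_le_bound _ hC0
    intro x
    have e1 : ‖f x‖ ^ 2 = ∑ i, (μ i * b.repr x i) ^ 2 := by
      rw [← b.repr.norm_map (f x), euclid_norm_sq']
      simp [hrepr]
    have e2 : ‖x‖ ^ 2 = ∑ i, (b.repr x i) ^ 2 := by
      rw [← b.repr.norm_map x, euclid_norm_sq']
    have hsq : ‖f x‖ ^ 2 ≤ (C * ‖x‖) ^ 2 := by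
      rw [e1, mul_pow, e2, Finset.mul_sum]
      apply Finset.sum_le_sum
      intro i _
      rw [mul_pow]
      refine mul_le_mul_of_nonneg_right ?_ (sq_nonneg _)
      rw [← sq_abs (μ i)]
      exact pow_le_pow_left₀ (abs_nonneg _) (hCi i) 2
    have h2 : 0 ≤ C * ‖x‖ := mul_nonneg hC0 (norm_nonneg _)
    exact (pow_le_pow_iff_left₀ (norm_nonneg _) h2 two_ne_zero).mp hsq
  have hlb : C ≤ ‖f‖ := by
    apply ciSup_le
    intro i
    have h1 : ‖f (b i)‖ = |μ i| := by
      rw [hfb, norm_smul, b.orthonormal.1 i]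
      simp [Real.norm_eq_abs]
    calc |μ i| = ‖f (b i)‖ := h1.symm
      _ ≤ ‖f‖ * ‖b i‖ := f.le_opNorm _
      _ = ‖f‖ := by rw [b.orthonormal.1 i, mul_one]
  exact le_antisymm hub hlb

lemma eigen_dot_self' {n : Type*} [Fintype n] [DecidableEq n] {M : Matrix n n ℝ}
    (hM : M.IsHermitian) (i : n) :
    ⇑(hM.eigenvectorBasis i) ⬝ᵥ ⇑(hM.eigenvectorBasis i) = 1 := by
  have h1 : ‖hM.eigenvectorBasis i‖ = 1 := hM.eigenvectorBasis.orthonormal.1 i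
  have h2 := euclid_norm_sq' (hM.eigenvectorBasis i)
  rw [h1] at h2
  simp only [dotProduct, ← sq]
  rw [← h2]; norm_num

lemma eig_le_one' {n : Type*} [Fintype n] [DecidableEq n] {M : Matrix n n ℝ}
    (hM : M.IsHermitian) (h1 : (1 - M).PosSemidef) (i : n) :
    hM.eigenvalues i ≤ 1 := by
  have h2 := h1.dotProduct_mulVec_nonneg ⇑(hM.eigenvectorBasis i)
  rw [sub_mulVec, one_mulVec, hM.mulVec_eigenvectorBasis] at h2
  simp only [star_trivial, dotProduct_sub, dotProduct_smul, smul_eq_mul,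
    eigen_dot_self' hM i, mul_one] at h2
  linarith

lemma eig_ne_zero' {n : Type*} [Fintype n] [DecidableEq n] {M : Matrix n n ℝ}
    (hM : M.IsHermitian) (hdet : IsUnit M.det) (i : n) :
    hM.eigenvalues i ≠ 0 := by
  intro h0
  have h := hM.det_eq_prod_eigenvalues
  rw [Finset.prod_eq_zero (Finset.mem_univ i) (by exact_mod_cast h0)] at h
  rw [h] at hdet
  simp at hdet

lemma inv_mulVec_eigen' {n : Type*} [Fintype n] [DecidableEq n] {M : Matrix n n ℝ}
    (hM : M.IsHermitian) (hdet : IsUnit M.det) (i : n) :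
    M⁻¹ *ᵥ ⇑(hM.eigenvectorBasis i)
      = (hM.eigenvalues i)⁻¹ • ⇑(hM.eigenvectorBasis i) := by
  have hne := eig_ne_zero' hM hdet i
  have h1 : M⁻¹ *ᵥ (M *ᵥ ⇑(hM.eigenvectorBasis i)) = ⇑(hM.eigenvectorBasis i) := by
    rw [mulVec_mulVec, Matrix.nonsing_inv_mul M hdet, one_mulVec]
  rw [hM.mulVec_eigenvectorBasis, mulVec_smul] at h1
  calc M⁻¹ *ᵥ ⇑(hM.eigenvectorBasis i)
      = (hM.eigenvalues i)⁻¹ • (hM.eigenvalues i • (M⁻¹ *ᵥ ⇑(hM.eigenvectorBasis i))) := by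
        rw [smul_smul, inv_mul_cancel₀ hne, one_smul]
    _ = (hM.eigenvalues i)⁻¹ • ⇑(hM.eigenvectorBasis i) := by rw [h1]

lemma sinTheta_iSup_eq' {n : Type*} [Fintype n] [Nonempty n] {ξ : n → ℝ} {j₀ : n}
    (hpos : ∀ j, 0 < ξ j) (hmin : ∀ j, ξ j₀ ≤ ξ j) :
    ⨆ j, |(ξ j)⁻¹| = (ξ j₀)⁻¹ := by
  have habs : ∀ j, |(ξ j)⁻¹| = (ξ j)⁻¹ := fun j => abs_of_pos (inv_pos.mpr (hpos j))
  apply le_antisymm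
  · exact ciSup_le fun j => by rw [habs]; exact inv_anti₀ (hpos j₀) (hmin j)
  · rw [← habs j₀]
    exact le_ciSup (Set.Finite.bddAbove (Set.finite_range fun j => |(ξ j)⁻¹|)) j₀

lemma sinTheta_iSup_sub_one_eq' {n : Type*} [Fintype n] [Nonempty n] {ξ : n → ℝ} {j₀ : n}
    (hpos : ∀ j, 0 < ξ j) (hle : ∀ j, ξ j ≤ 1) (hmin : ∀ j, ξ j₀ ≤ ξ j) :
    ⨆ j, |(ξ j)⁻¹ - 1| = (ξ j₀)⁻¹ - 1 := by
  have habs : ∀ j, |(ξ j)⁻¹ - 1| = (ξ j)⁻¹ - 1 := fun j =>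
    abs_of_nonneg (sub_nonneg.mpr ((one_le_inv₀ (hpos j)).mpr (hle j)))
  apply le_antisymm
  · exact ciSup_le fun j => by
      rw [habs]; exact sub_le_sub_right (inv_anti₀ (hpos j₀) (hmin j)) 1
  · rw [← habs j₀]
    exact le_ciSup (Set.Finite.bddAbove (Set.finite_range fun j => |(ξ j)⁻¹ - 1|)) j₀

lemma sinTheta_iInf_eq' {n : Type*} [Fintype n] [Nonempty n] {ξ : n → ℝ} {j₀ : n}
    (hmin : ∀ j, ξ j₀ ≤ ξ j) : ⨅ j, ξ j = ξ j₀ :=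
  le_antisymm (ciInf_le (Set.Finite.bddBelow (Set.finite_range ξ)) j₀) (le_ciInf hmin)

/-- Core computation: if `BᴴB = 1 - AᴴA` with `A` invertible and `1 - AAᴴ` PSD, then
the spectral norm of `B A⁻¹` is `√(1-m)/√m` with `m` the smallest eigenvalue of `AᴴA`. -/
lemma spec_core {q n : Type*} [Fintype q] [Fintype n] [DecidableEq n] [Nonempty n]
    (A : Matrix n n ℝ) (B : Matrix q n ℝ) (hdetA : IsUnit A.det)
    (hBB : Bᴴ * B = 1 - Aᴴ * A) (hM'psd : ((1 : Matrix n n ℝ) - A * Aᴴ).PosSemidef) :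
    spec (B * A⁻¹) =
      Real.sqrt (1 - (⨅ i, (Matrix.isHermitian_transpose_mul_self A).eigenvalues i)) /
        Real.sqrt (⨅ i, (Matrix.isHermitian_transpose_mul_self A).eigenvalues i) := by
  have hAinv : A * A⁻¹ = 1 := Matrix.mul_nonsing_inv A hdetA
  set hM := Matrix.isHermitian_transpose_mul_self A with hMdef
  have hM'h : (A * Aᴴ).IsHermitian := Matrix.isHermitian_mul_conjTranspose_self A
  set μ := hM.eigenvalues with hμdef
  set ν := hM'h.eigenvalues with hνdef
  have hdetAH : IsUnit (Aᴴ).det := by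
    rw [Matrix.det_conjTranspose]; exact hdetA.star
  have hMdet : IsUnit (Aᴴ * A).det := by rw [Matrix.det_mul]; exact hdetAH.mul hdetA
  have hM'det : IsUnit (A * Aᴴ).det := by rw [Matrix.det_mul]; exact hdetA.mul hdetAH
  -- positivity and boundedness of eigenvalues
  have hMpsd : (Aᴴ * A).PosSemidef := Matrix.posSemidef_conjTranspose_mul_self A
  have hμpos : ∀ i, 0 < μ i := fun i =>
    lt_of_le_of_ne (hMpsd.eigenvalues_nonneg i) (Ne.symm (eig_ne_zero' hM hMdet i))
  have hμle : ∀ i, μ i ≤ 1 := by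
    intro i
    refine eig_le_one' hM ?_ i
    rw [show Aᵀ = Aᴴ by ext i j; simp [conjTranspose_apply], ← hBB]
    exact Matrix.posSemidef_conjTranspose_mul_self B
  have hνpos : ∀ j, 0 < ν j := fun j =>
    lt_of_le_of_ne ((Matrix.posSemidef_self_mul_conjTranspose A).eigenvalues_nonneg j)
      (Ne.symm (eig_ne_zero' hM'h hM'det j))
  have hνle : ∀ j, ν j ≤ 1 := fun j => eig_le_one' hM'h hM'psd j
  -- minimizers
  obtain ⟨i₀, hi₀⟩ := Finite.exists_min μ
  obtain ⟨j₀, hj₀⟩ := Finite.exists_min ν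
  -- the two inverse Gram matrices have the same spectral norm
  have hspecinv : spec ((Aᴴ * A)⁻¹) = spec ((A * Aᴴ)⁻¹) := by
    rw [spec_eq_norm', spec_eq_norm', Matrix.mul_inv_rev, Matrix.mul_inv_rev,
      ← Matrix.conjTranspose_nonsing_inv]
    calc ‖A⁻¹ * (A⁻¹)ᴴ‖ = ‖((A⁻¹)ᴴ)ᴴ * (A⁻¹)ᴴ‖ := by rw [Matrix.conjTranspose_conjTranspose]
      _ = ‖(A⁻¹)ᴴ‖ * ‖(A⁻¹)ᴴ‖ := Matrix.l2_opNorm_conjTranspose_mul_self _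
      _ = ‖A⁻¹‖ * ‖A⁻¹‖ := by rw [Matrix.l2_opNorm_conjTranspose]
      _ = ‖(A⁻¹)ᴴ * A⁻¹‖ := (Matrix.l2_opNorm_conjTranspose_mul_self _).symm
  -- compute both inverse norms via eigenvalues
  have hspecM : spec ((Aᴴ * A)⁻¹) = (μ i₀)⁻¹ := by
    rw [show Aᴴ = Aᵀ by ext i j; simp [conjTranspose_apply]]
    rw [spec_eq_iSup_abs' _ hM.eigenvectorBasis (fun i => (μ i)⁻¹)
      (fun i => inv_mulVec_eigen' hM hMdet i)]
    exact sinTheta_iSup_eq' hμpos hi₀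
  have hspecM' : spec ((A * Aᴴ)⁻¹) = (ν j₀)⁻¹ := by
    rw [spec_eq_iSup_abs' _ hM'h.eigenvectorBasis (fun j => (ν j)⁻¹)
      (fun j => inv_mulVec_eigen' hM'h hM'det j)]
    exact sinTheta_iSup_eq' hνpos hj₀
  have hμν : μ i₀ = ν j₀ :=
    inv_injective (hspecM.symm.trans (hspecinv.trans hspecM'))
  -- the Gram matrix of T := B * A⁻¹
  have hTT : (B * A⁻¹)ᴴ * (B * A⁻¹) = (A * Aᴴ)⁻¹ - 1 := by
    rw [Matrix.conjTranspose_mul]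
    calc (A⁻¹)ᴴ * Bᴴ * (B * A⁻¹) = (A⁻¹)ᴴ * (Bᴴ * B) * A⁻¹ := by
          simp only [Matrix.mul_assoc]
      _ = (A⁻¹)ᴴ * A⁻¹ - (A⁻¹)ᴴ * Aᴴ * (A * A⁻¹) := by
          rw [hBB, Matrix.mul_sub, Matrix.sub_mul, Matrix.mul_one]
          simp only [Matrix.mul_assoc]
      _ = (A * Aᴴ)⁻¹ - 1 := by
          rw [← Matrix.conjTranspose_mul, hAinv, Matrix.conjTranspose_one, Matrix.mul_one,
            Matrix.mul_inv_rev, ← Matrix.conjTranspose_nonsing_inv]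
  -- spectral norm of the Gram matrix of T
  have hTTspec : spec ((B * A⁻¹)ᴴ * (B * A⁻¹)) = (μ i₀)⁻¹ - 1 := by
    rw [hTT]
    have heig : ∀ j, ((A * Aᴴ)⁻¹ - 1) *ᵥ ⇑(hM'h.eigenvectorBasis j)
        = ((ν j)⁻¹ - 1) • ⇑(hM'h.eigenvectorBasis j) := by
      intro j
      rw [sub_mulVec, one_mulVec, inv_mulVec_eigen' hM'h hM'det j, sub_smul, one_smul]
    rw [spec_eq_iSup_abs' _ hM'h.eigenvectorBasis (fun j => (ν j)⁻¹ - 1) heig]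
    rw [sinTheta_iSup_sub_one_eq' hνpos hνle hj₀, hμν]
  -- C*-identity: spec T ^ 2 = spec (TᴴT)
  have hcstar : spec ((B * A⁻¹)ᴴ * (B * A⁻¹)) = spec (B * A⁻¹) * spec (B * A⁻¹) := by
    rw [spec_eq_norm', spec_eq_norm']
    exact Matrix.l2_opNorm_conjTranspose_mul_self _
  have hTnonneg : 0 ≤ spec (B * A⁻¹) := norm_nonneg _
  -- wrap up
  rw [sinTheta_iInf_eq' hi₀]
  have hTsq : spec (B * A⁻¹) ^ 2 = (1 - μ i₀) / μ i₀ := by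
    rw [sq, ← hcstar, hTTspec, sub_div, div_self (ne_of_gt (hμpos i₀)), inv_eq_one_div]
  calc spec (B * A⁻¹) = Real.sqrt (spec (B * A⁻¹) ^ 2) := (Real.sqrt_sq hTnonneg).symm
    _ = Real.sqrt ((1 - μ i₀) / μ i₀) := by rw [hTsq]
    _ = Real.sqrt (1 - μ i₀) / Real.sqrt (μ i₀) := Real.sqrt_div (by linarith [hμle i₀]) _

lemma conjT_eq_transpose' {m n : Type*} (A : Matrix m n ℝ) : Aᴴ = Aᵀ := by
  ext i j; simp [conjTranspose_apply]

/-- ‖U⊥ᵀ Ū (Uᵀ Ū)⁻¹‖ = ‖sin Θ(U, Ū)‖ / √(1 − ‖sin Θ(U, Ū)‖²), where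
‖sin Θ(U, Ū)‖ = √(1 − σ_r²(Uᵀ Ū)) and σ_r is the smallest singular value. -/
theorem stmt_9 {p r : ℕ} (hr : 0 < r)
    (U Ubar : Matrix (Fin p) (Fin r) ℝ) (Up : Matrix (Fin p) (Fin (p - r)) ℝ)
    (hU : Uᵀ * U = 1) (hUbar : Ubarᵀ * Ubar = 1) (hUp : Upᵀ * Up = 1)
    (horth : Uᵀ * Up = 0) (hcomp : U * Uᵀ + Up * Upᵀ = 1)
    (hinv : IsUnit (Uᵀ * Ubar)) :
    (let σmin : ℝ :=
      Real.sqrt (⨅ i, (Matrix.isHermitian_transpose_mul_self (Uᵀ * Ubar)).eigenvalues i);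
    let s : ℝ := Real.sqrt (1 - σmin ^ 2);
    spec (Upᵀ * Ubar * (Uᵀ * Ubar)⁻¹) = s / Real.sqrt (1 - s ^ 2)) := by
  have hrne : Nonempty (Fin r) := ⟨⟨0, hr⟩⟩
  have hdetA : IsUnit (Uᵀ * Ubar).det := (Matrix.isUnit_iff_isUnit_det _).mp hinv
  -- the key algebraic identity BᴴB = 1 - AᴴA
  have hBB : (Upᵀ * Ubar)ᴴ * (Upᵀ * Ubar) = 1 - (Uᵀ * Ubar)ᴴ * (Uᵀ * Ubar) := by
    rw [conjT_eq_transpose', conjT_eq_transpose', Matrix.transpose_mul, Matrix.transpose_mul,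
      Matrix.transpose_transpose, Matrix.transpose_transpose]
    have key : Ubarᵀ * U * (Uᵀ * Ubar) + Ubarᵀ * Up * (Upᵀ * Ubar) = 1 := by
      calc Ubarᵀ * U * (Uᵀ * Ubar) + Ubarᵀ * Up * (Upᵀ * Ubar)
          = Ubarᵀ * (U * Uᵀ + Up * Upᵀ) * Ubar := by
            simp only [Matrix.mul_add, Matrix.add_mul, Matrix.mul_assoc]
        _ = 1 := by rw [hcomp, Matrix.mul_one, hUbar]
    exact eq_sub_of_add_eq' key
  -- PSD of 1 - A Aᴴ
  have hM'psd : ((1 : Matrix (Fin r) (Fin r) ℝ) - (Uᵀ * Ubar) * (Uᵀ * Ubar)ᴴ).PosSemidef := by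
    have hPP : (Ubar * Ubarᵀ) * (Ubar * Ubarᵀ) = Ubar * Ubarᵀ := by
      rw [Matrix.mul_assoc, ← Matrix.mul_assoc Ubarᵀ, hUbar, Matrix.one_mul]
    have hfact : ((1 : Matrix (Fin p) (Fin p) ℝ) - Ubar * Ubarᵀ) * U
        = (1 - Ubar * Ubarᵀ) * ((1 - Ubar * Ubarᵀ) * U) := by
      rw [← Matrix.mul_assoc]
      congr 1
      simp only [Matrix.mul_sub, Matrix.sub_mul, Matrix.one_mul, Matrix.mul_one, hPP]
      abel
    have hgoal : (1 : Matrix (Fin r) (Fin r) ℝ) - (Uᵀ * Ubar) * (Uᵀ * Ubar)ᴴ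
        = ((1 - Ubar * Ubarᵀ) * U)ᴴ * ((1 - Ubar * Ubarᵀ) * U) := by
      rw [conjT_eq_transpose', conjT_eq_transpose']
      rw [Matrix.transpose_mul (1 - Ubar * Ubarᵀ) U, Matrix.transpose_sub,
        Matrix.transpose_one, Matrix.transpose_mul Ubar Ubarᵀ, Matrix.transpose_transpose]
      conv_rhs => rw [Matrix.mul_assoc, ← hfact]
      rw [Matrix.transpose_mul, Matrix.transpose_transpose]
      rw [Matrix.sub_mul, Matrix.one_mul, Matrix.mul_sub, hU]
      congr 1
      simp only [Matrix.mul_assoc]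
    rw [hgoal]
    exact Matrix.posSemidef_conjTranspose_mul_self _
  have hcore := spec_core (Uᵀ * Ubar) (Upᵀ * Ubar) hdetA hBB hM'psd
  -- eigenvalue bounds for the arithmetic
  set hM := Matrix.isHermitian_transpose_mul_self (Uᵀ * Ubar) with hMdef
  set m := ⨅ i, hM.eigenvalues i with hm
  have hMpsd : ((Uᵀ * Ubar)ᴴ * (Uᵀ * Ubar)).PosSemidef :=
    Matrix.posSemidef_conjTranspose_mul_self _
  have hm0 : 0 ≤ m := le_ciInf fun i => hMpsd.eigenvalues_nonneg i
  have hm1 : m ≤ 1 := by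
    have h1 : hM.eigenvalues (Classical.arbitrary (Fin r)) ≤ 1 := by
      refine eig_le_one' hM ?_ _
      rw [show (Uᵀ * Ubar)ᵀ = (Uᵀ * Ubar)ᴴ from (conjT_eq_transpose' _).symm, ← hBB]
      exact Matrix.posSemidef_conjTranspose_mul_self _
    exact le_trans (ciInf_le (Set.Finite.bddBelow (Set.finite_range _)) _) h1
  show spec (Upᵀ * Ubar * (Uᵀ * Ubar)⁻¹) =
    Real.sqrt (1 - Real.sqrt m ^ 2) / Real.sqrt (1 - Real.sqrt (1 - Real.sqrt m ^ 2) ^ 2)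
  rw [Real.sq_sqrt hm0, Real.sq_sqrt (by linarith : (0:ℝ) ≤ 1 - m)]
  rw [show (1 : ℝ) - (1 - m) = m by ring]
  exact hcore
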